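/- Let f ∈ ℝ[x_1,...,x_n] be nonnegative on [−1,1]^n and let ε > 0. If r ∈ ℕ is such that the polynomial f(x) + ε(1 + Σ_{i=1}^n x_i^{2r}) is a sum of squares of polynomials of degree at most 2r, then f + (n+1)ε belongs to the truncated pre-ordering 𝒯(1±x_1,...,1±x_n)_{2r}. -/

import Mathlib

open MvPolynomial

/-- Truncated pre-ordering generated by the polynomials `g i`, with degree bound `r`. -/
def truncPre {σ ι : Type} [Fintype ι] [DecidableEq ι]
    (g : ι → MvPolynomial σ ℝ) (r : ℕ) : Set (MvPolynomial σ ℝ) :=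
  {p | ∃ s : Finset ι → MvPolynomial σ ℝ,
    (∀ I, IsSumSq (s I)) ∧
    (∀ I : Finset ι, (s I * ∏ i ∈ I, g i).totalDegree ≤ r) ∧
    p = ∑ I : Finset ι, s I * ∏ i ∈ I, g i}

/-- The `2n` generators `1 ± x_i`, indexed by a variable together with a sign. -/
noncomputable def pmGen {σ : Type} (v : σ × Bool) : MvPolynomial σ ℝ :=
  if v.2 then 1 + MvPolynomial.X v.1 else 1 - MvPolynomial.X v.1

private lemma isSumSq_finsum {R : Type*} [AddCommMonoid R] [Mul R] {ι : Type*} (s : Finset ι)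
    (f : ι → R) (h : ∀ i ∈ s, IsSumSq (f i)) : IsSumSq (∑ i ∈ s, f i) := by
  induction s using Finset.cons_induction with
  | empty => simpa using IsSumSq.zero
  | cons i s his ih =>
    rw [Finset.sum_cons]
    exact (h i (Finset.mem_cons_self i s)).add
      (ih fun j hj => h j (Finset.mem_cons_of_mem hj))

/-- If `f` is nonnegative on `[−1,1]^n`, `ε > 0`, and
`f + ε(1 + ∑_i x_i^{2r})` is a sum of squares of polynomials of degree at most `2r`,
then `f + (n+1)ε ∈ 𝒯(1±x_1,...,1±x_n)_{2r}`. -/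
theorem perturbed_sos_implies_truncPre (n r : ℕ) (f : MvPolynomial (Fin n) ℝ)
    (hf : ∀ x : Fin n → ℝ, (∀ i, |x i| ≤ 1) → 0 ≤ eval x f)
    (ε : ℝ) (hε : 0 < ε)
    (hsos : IsSumSq (f + MvPolynomial.C ε *
        (1 + ∑ i : Fin n, MvPolynomial.X i ^ (2 * r))))
    (hdeg : (f + MvPolynomial.C ε *
        (1 + ∑ i : Fin n, MvPolynomial.X i ^ (2 * r))).totalDegree ≤ 2 * r) :
    f + MvPolynomial.C ((n + 1) * ε) ∈ truncPre (pmGen (σ := Fin n)) (2 * r) := by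
  classical
  set P : MvPolynomial (Fin n) ℝ :=
    f + MvPolynomial.C ε * (1 + ∑ i : Fin n, MvPolynomial.X i ^ (2 * r)) with hP
  set q : Fin n → MvPolynomial (Fin n) ℝ := fun i =>
    ∑ k ∈ Finset.range r,
      (MvPolynomial.C (Real.sqrt ε) * MvPolynomial.X i ^ k) *
      (MvPolynomial.C (Real.sqrt ε) * MvPolynomial.X i ^ k) with hq
  set pair : Fin n → Finset (Fin n × Bool) := fun i => {(i, true), (i, false)} with hpair
  -- basic facts
  have hpair_inj : ∀ i j : Fin n, pair i = pair j → i = j := by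
    intro i j h
    have : (i, true) ∈ pair j := h ▸ (by simp [hpair])
    simpa [hpair] using this
  have hpair_ne : ∀ i : Fin n, pair i ≠ (∅ : Finset (Fin n × Bool)) := by
    intro i
    simp [hpair]
  have hq_eq : ∀ i, q i = MvPolynomial.C ε *
      ∑ k ∈ Finset.range r, MvPolynomial.X i ^ (2 * k) := by
    intro i
    rw [hq, Finset.mul_sum]
    refine Finset.sum_congr rfl fun k _ => ?_
    rw [mul_mul_mul_comm, ← MvPolynomial.C_mul, Real.mul_self_sqrt hε.le, ← pow_add, two_mul]
  have hprod : ∀ i, (∏ v ∈ pair i, pmGen v) =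
      (1 + MvPolynomial.X i) * (1 - MvPolynomial.X i) := by
    intro i
    rw [hpair]
    rw [Finset.prod_pair (by simp)]
    simp [pmGen]
  have hgeom : ∀ i : Fin n,
      (∑ k ∈ Finset.range r, (MvPolynomial.X i : MvPolynomial (Fin n) ℝ) ^ (2 * k)) *
        ((1 + MvPolynomial.X i) * (1 - MvPolynomial.X i)) =
        1 - MvPolynomial.X i ^ (2 * r) := by
    intro i
    simp only [pow_mul]
    linear_combination (-1 : MvPolynomial (Fin n) ℝ) *
      geom_sum_mul ((MvPolynomial.X i : MvPolynomial (Fin n) ℝ) ^ 2) r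
  have hqprod : ∀ i, q i * ∏ v ∈ pair i, pmGen v =
      MvPolynomial.C ε * (1 - MvPolynomial.X i ^ (2 * r)) := by
    intro i
    rw [hq_eq, hprod, mul_assoc, hgeom]
  -- the certificate
  refine ⟨fun I => (if I = ∅ then P else 0) +
    ∑ i ∈ Finset.univ.filter (fun i : Fin n => I = pair i), q i, ?_, ?_, ?_⟩
  · intro I
    refine IsSumSq.add ?_ (isSumSq_finsum _ _ fun i _ => IsSumSq.sum_mul_self _ _)
    by_cases h : I = ∅
    · simpa [h] using hsos
    · simpa [h] using IsSumSq.zero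
  · intro I
    by_cases h0 : I = ∅
    · subst h0
      have hfil : Finset.univ.filter
          (fun i : Fin n => (∅ : Finset (Fin n × Bool)) = pair i) = ∅ :=
        Finset.filter_false_of_mem fun i _ h => hpair_ne i h.symm
      simpa [hfil] using hdeg
    · by_cases h1 : ∃ i, I = pair i
      · obtain ⟨i, rfl⟩ := h1
        have hfil : Finset.univ.filter (fun j : Fin n => pair i = pair j) = {i} := by
          ext j
          simp only [Finset.mem_filter, Finset.mem_univ, true_and, Finset.mem_singleton]
          exact ⟨fun h => (hpair_inj i j h).symm, fun h => h ▸ rfl⟩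
        simp only [if_neg h0, hfil, Finset.sum_singleton, zero_add, hqprod]
        rcases Nat.eq_zero_or_pos r with hr | hr
        · simp [hr]
        calc (MvPolynomial.C ε * (1 - MvPolynomial.X i ^ (2 * r))).totalDegree
            ≤ (MvPolynomial.C ε : MvPolynomial (Fin n) ℝ).totalDegree +
              (1 - MvPolynomial.X i ^ (2 * r) : MvPolynomial (Fin n) ℝ).totalDegree :=
              MvPolynomial.totalDegree_mul _ _
          _ ≤ 2 * r := by
              rw [MvPolynomial.totalDegree_C, zero_add, sub_eq_add_neg]
              refine le_trans (MvPolynomial.totalDegree_add _ _) ?_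
              simp [MvPolynomial.totalDegree_neg, MvPolynomial.totalDegree_X_pow]
      · have hfil : Finset.univ.filter (fun i : Fin n => I = pair i) = ∅ := by
          refine Finset.filter_false_of_mem fun i _ h => h1 ⟨i, h⟩
        simp [h0, hfil]
  · -- the sum identity
    have key : ∑ I : Finset (Fin n × Bool),
        ((if I = ∅ then P else 0) +
          ∑ i ∈ Finset.univ.filter (fun i : Fin n => I = pair i), q i) *
          ∏ v ∈ I, pmGen v
        = P + ∑ i : Fin n, q i * ∏ v ∈ pair i, pmGen v := by
      rw [Finset.sum_congr rfl (fun I _ => add_mul _ _ _), Finset.sum_add_distrib]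
      congr 1
      · rw [Finset.sum_congr rfl (fun I _ => by rw [ite_mul, zero_mul]),
          Finset.sum_ite_eq' Finset.univ (∅ : Finset (Fin n × Bool))]
        simp
      · rw [Finset.sum_congr rfl (fun I _ => Finset.sum_mul _ _ _),
          Finset.sum_congr rfl (fun I _ => Finset.sum_filter _ _)]
        rw [Finset.sum_comm]
        refine Finset.sum_congr rfl fun i _ => ?_
        have : ∀ I : Finset (Fin n × Bool),
            (if I = pair i then q i * ∏ v ∈ I, pmGen v else 0) =
            (if I = pair i then q i * ∏ v ∈ pair i, pmGen v else 0) := by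
          intro I; split <;> simp_all
        rw [Finset.sum_congr rfl fun I _ => this I, Finset.sum_ite_eq'
          Finset.univ (pair i)]
        simp
    rw [key]
    have hsum : ∑ i : Fin n, q i * ∏ v ∈ pair i, pmGen v =
        MvPolynomial.C ε * ∑ i : Fin n, (1 - MvPolynomial.X i ^ (2 * r)) := by
      rw [Finset.mul_sum]
      exact Finset.sum_congr rfl fun i _ => hqprod i
    rw [hsum, hP, Finset.sum_sub_distrib, Finset.sum_const, Finset.card_univ,
      Fintype.card_fin]
    have hC : (MvPolynomial.C ((n + 1) * ε) : MvPolynomial (Fin n) ℝ) =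
        ((n : MvPolynomial (Fin n) ℝ) + 1) * MvPolynomial.C ε := by
      rw [MvPolynomial.C_mul, map_add, map_one, map_natCast]
    rw [hC]
    push_cast
    ring
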